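/- arXiv:1108.4059 — 5 statements merged into one kernel-verified Lean document; each statement's English description precedes it below -/
import Mathlib

section
/- The vector of Poisson weights x_k = e^{-λ/(α+γ)} (λ/(α+γ))^k / k! (k = 0,1,2,...) is an equilibrium of the infinite-dimensional ODE system ẋ_k = α(∑_ℓ (ℓ-k) x_ℓ) x_k + λ(x_{k-1} - x_k) + γ((k+1)x_{k+1} - k x_k); that is, the right-hand side vanishes for every k when the x_k are these Poisson weights. -/
open Real

/-- The Poisson weights with parameter `λ/(α+γ)` are an equilibrium of the
infinite-dimensional ODE system of Muller's ratchet with compensatory mutations. -/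
theorem poisson_equilibrium (α lam γ : ℝ) (hα : 0 ≤ α) (hlam : 0 ≤ lam) (hγ : 0 ≤ γ)
    (hαγ : 0 < α + γ)
    (x : ℕ → ℝ) (hx : ∀ k : ℕ, x k = Real.exp (-(lam / (α + γ))) * (lam / (α + γ)) ^ k / (Nat.factorial k : ℝ)) :
    ∀ k : ℕ,
      α * (∑' ℓ : ℕ, ((ℓ : ℝ) - k) * x ℓ) * x k
        + lam * ((if k = 0 then 0 else x (k - 1)) - x k)
        + γ * ((k + 1 : ℝ) * x (k + 1) - (k : ℝ) * x k) = 0 := by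
  set μ : ℝ := lam / (α + γ) with hμ
  have hlam_eq : lam = μ * (α + γ) := by
    rw [hμ, div_mul_cancel₀ _ hαγ.ne']
  -- exp series
  have hexp : ∑' n : ℕ, μ ^ n / (n.factorial : ℝ) = Real.exp μ := by
    rw [Real.exp_eq_exp_ℝ, NormedSpace.exp_eq_tsum_div]
  have hxs : Summable x := by
    have := (Real.summable_pow_div_factorial μ).mul_left (Real.exp (-μ))
    refine this.congr fun n => ?_
    rw [hx n]; ring
  have hsum1 : ∑' ℓ : ℕ, x ℓ = 1 := by
    calc ∑' ℓ : ℕ, x ℓ = ∑' ℓ : ℕ, Real.exp (-μ) * (μ ^ ℓ / (ℓ.factorial : ℝ)) := by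
          refine tsum_congr fun n => ?_
          rw [hx n]; ring
      _ = Real.exp (-μ) * ∑' ℓ : ℕ, μ ^ ℓ / (ℓ.factorial : ℝ) := tsum_mul_left
      _ = 1 := by rw [hexp, ← Real.exp_add]; simp
  -- shift identity: (n+1) * x (n+1) = μ * x n
  have hshift : ∀ n : ℕ, ((n : ℝ) + 1) * x (n + 1) = μ * x n := by
    intro n
    rw [hx (n + 1), hx n]
    rw [Nat.factorial_succ, pow_succ]
    push_cast
    have h1 : (n.factorial : ℝ) ≠ 0 := Nat.cast_ne_zero.mpr (Nat.factorial_ne_zero n)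
    field_simp
  have hms : Summable (fun ℓ : ℕ => (ℓ : ℝ) * x ℓ) := by
    rw [← summable_nat_add_iff 1]
    refine (hxs.mul_left μ).congr fun n => ?_
    push_cast
    exact (hshift n).symm
  have hmean : ∑' ℓ : ℕ, (ℓ : ℝ) * x ℓ = μ := by
    rw [Summable.tsum_eq_zero_add hms]
    simp only [Nat.cast_zero, zero_mul, zero_add]
    calc ∑' n : ℕ, ((n + 1 : ℕ) : ℝ) * x (n + 1) = ∑' n : ℕ, μ * x n := by
          refine tsum_congr fun n => ?_
          push_cast
          exact hshift n
      _ = μ := by rw [tsum_mul_left, hsum1, mul_one]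
  intro k
  have hts : ∑' ℓ : ℕ, ((ℓ : ℝ) - k) * x ℓ = μ - k := by
    have h : ∀ ℓ : ℕ, ((ℓ : ℝ) - k) * x ℓ = (ℓ : ℝ) * x ℓ - (k : ℝ) * x ℓ := by
      intro ℓ; ring
    rw [tsum_congr h, Summable.tsum_sub hms (hxs.mul_left _), tsum_mul_left, hmean, hsum1, mul_one]
  rw [hts]
  rcases k with _ | n
  · simp only [if_pos rfl]
    have h2 := hshift 0
    push_cast at h2 ⊢
    linear_combination γ * h2 - x 0 * hlam_eq
  · simp only [Nat.succ_ne_zero, if_neg, Nat.succ_sub_one]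
    have hk := hshift n
    have h2 := hshift (n + 1)
    push_cast at hk h2 ⊢
    linear_combination γ * h2 - (α + γ) * hk + (x n - x (n + 1)) * hlam_eq
end

section
/- Let (x(t))_{t≥0} be a solution of ẋ_k = α(∑_ℓ(ℓ-k)x_ℓ)x_k + λ(x_{k-1}-x_k) + γ((k+1)x_{k+1} - kx_k) taking values in S_ξ, such that all term-wise differentiations are justified. Then for 0 < ζ < ξ, d/dt log h_ζ(x(t)) = α ∑_ℓ ℓ x_ℓ(t) + λ(e^ζ - 1) - (α + γ(1 - e^{-ζ})) (d/dζ) log h_ζ(x(t)). -/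
open Real

/-- Dynamics of the cumulant generating function: for a solution of the infinite-dimensional
ODE system with values in `S_ξ` (termwise differentiation being justified), for `0 < ζ < ξ`,
`d/dt log h_ζ(x(t)) = α κ₁(x(t)) + λ(e^ζ - 1) - (α + γ(1 - e^{-ζ})) ∂_ζ log h_ζ(x(t))`. -/
theorem cumulant_dynamics (α lam γ ξ ζ : ℝ) (hα : 0 ≤ α) (hlam : 0 ≤ lam) (hγ : 0 ≤ γ)
    (hζ0 : 0 < ζ) (hζξ : ζ < ξ)
    (x : ℝ → ℕ → ℝ) (t : ℝ)
    (hpos : ∀ s k, 0 ≤ x s k) (hsum1 : ∀ s, (∑' k, x s k) = 1)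
    (hexp : ∀ s, Summable (fun k : ℕ => x s k * Real.exp (ξ * k)))
    (hode : ∀ s (k : ℕ), HasDerivAt (fun u => x u k)
        (α * (∑' ℓ : ℕ, ((ℓ : ℝ) - k) * x s ℓ) * x s k
          + lam * ((if k = 0 then 0 else x s (k - 1)) - x s k)
          + γ * (((k : ℝ) + 1) * x s (k + 1) - (k : ℝ) * x s k)) s)
    -- termwise differentiation of `h_ζ` is justified:
    (hterm : HasDerivAt (fun s => ∑' k : ℕ, x s k * Real.exp (ζ * k))
        (∑' k : ℕ,
          (α * (∑' ℓ : ℕ, ((ℓ : ℝ) - k) * x t ℓ) * x t k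
            + lam * ((if k = 0 then 0 else x t (k - 1)) - x t k)
            + γ * (((k : ℝ) + 1) * x t (k + 1) - (k : ℝ) * x t k)) * Real.exp (ζ * k)) t) :
    HasDerivAt (fun s => Real.log (∑' k : ℕ, x s k * Real.exp (ζ * k)))
      (α * (∑' ℓ : ℕ, (ℓ : ℝ) * x t ℓ) + lam * (Real.exp ζ - 1)
        - (α + γ * (1 - Real.exp (-ζ)))
          * ((∑' k : ℕ, (k : ℝ) * x t k * Real.exp (ζ * k))
              / (∑' k : ℕ, x t k * Real.exp (ζ * k)))) t := by
  have hξpos : (0:ℝ) < ξ := lt_trans hζ0 hζξ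
  have hexp1 : ∀ k : ℕ, (1:ℝ) ≤ Real.exp (ζ * k) := by
    intro k
    rw [show (1:ℝ) = Real.exp 0 by simp]
    exact Real.exp_le_exp.2 (by positivity)
  -- basic summability facts at time t
  have hSξ : Summable (fun k : ℕ => x t k * Real.exp (ξ * k)) := hexp t
  have hS0 : Summable (fun k : ℕ => x t k * Real.exp (ζ * k)) := by
    refine hSξ.of_nonneg_of_le
      (fun k => mul_nonneg (hpos t k) (Real.exp_pos _).le) (fun k => ?_)
    have : Real.exp (ζ * k) ≤ Real.exp (ξ * k) :=
      Real.exp_le_exp.2 (mul_le_mul_of_nonneg_right hζξ.le (Nat.cast_nonneg k))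
    exact mul_le_mul_of_nonneg_left this (hpos t k)
  have hSa : Summable (fun k : ℕ => x t k) := by
    refine hS0.of_nonneg_of_le (fun k => hpos t k) (fun k => ?_)
    nlinarith [hpos t k, hexp1 k]
  have hSK : Summable (fun k : ℕ => (k:ℝ) * x t k * Real.exp (ζ * k)) := by
    refine (hSξ.mul_left ((ξ - ζ)⁻¹)).of_nonneg_of_le
      (fun k => mul_nonneg (mul_nonneg (Nat.cast_nonneg k) (hpos t k)) (Real.exp_pos _).le)
      (fun k => ?_)
    have hd : (0:ℝ) < ξ - ζ := by linarith
    have h1 : (ξ - ζ) * k ≤ Real.exp ((ξ - ζ) * k) := by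
      have := Real.add_one_le_exp ((ξ - ζ) * (k:ℝ))
      linarith
    have h2 : (ξ - ζ) * ((k:ℝ) * Real.exp (ζ * k)) ≤ Real.exp (ξ * k) := by
      have he : Real.exp ((ξ - ζ) * k) * Real.exp (ζ * k) = Real.exp (ξ * k) := by
        rw [← Real.exp_add]; ring_nf
      nlinarith [Real.exp_pos (ζ * (k:ℝ)), Real.exp_pos ((ξ - ζ) * (k:ℝ))]
    have h3 : (k:ℝ) * Real.exp (ζ * k) ≤ (ξ - ζ)⁻¹ * Real.exp (ξ * k) := by
      rw [le_inv_mul_iff₀ hd]; linarith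
    calc (k:ℝ) * x t k * Real.exp (ζ * k) = x t k * ((k:ℝ) * Real.exp (ζ * k)) := by ring
      _ ≤ x t k * ((ξ - ζ)⁻¹ * Real.exp (ξ * k)) := mul_le_mul_of_nonneg_left h3 (hpos t k)
      _ = (ξ - ζ)⁻¹ * (x t k * Real.exp (ξ * k)) := by ring
  have hSm : Summable (fun ℓ : ℕ => (ℓ:ℝ) * x t ℓ) := by
    refine hSK.of_nonneg_of_le
      (fun k => mul_nonneg (Nat.cast_nonneg k) (hpos t k)) (fun k => ?_)
    nlinarith [mul_nonneg (Nat.cast_nonneg (α := ℝ) k) (hpos t k), hexp1 k]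
  -- abbreviations
  set h : ℝ := ∑' k : ℕ, x t k * Real.exp (ζ * k) with hh
  set K : ℝ := ∑' k : ℕ, (k:ℝ) * x t k * Real.exp (ζ * k) with hK
  set M : ℝ := ∑' ℓ : ℕ, (ℓ:ℝ) * x t ℓ with hM
  have hhpos : 0 < h := by
    have hle : (1:ℝ) ≤ h := by
      rw [← hsum1 t]
      refine Summable.tsum_le_tsum (fun k => ?_) hSa hS0
      nlinarith [hpos t k, hexp1 k]
    linarith
  -- the inner tsum
  have hinner : ∀ k : ℕ, (∑' ℓ : ℕ, ((ℓ:ℝ) - k) * x t ℓ) = M - k := by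
    intro k
    have heq : (fun ℓ : ℕ => ((ℓ:ℝ) - k) * x t ℓ)
        = fun ℓ : ℕ => (ℓ:ℝ) * x t ℓ - (k:ℝ) * x t ℓ := by
      funext ℓ; ring
    rw [heq, Summable.tsum_sub hSm (hSa.mul_left (k:ℝ)), tsum_mul_left, hsum1 t, mul_one]
  -- shifted summabilities
  have hSb : Summable (fun k : ℕ => (if k = 0 then 0 else x t (k - 1)) * Real.exp (ζ * k)) := by
    apply (summable_nat_add_iff 1).1
    refine (hS0.mul_left (Real.exp ζ)).congr fun n => ?_
    simp only [Nat.add_sub_cancel, Nat.succ_ne_zero, if_false]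
    push_cast
    rw [mul_add, mul_one, Real.exp_add]
    ring
  have hSsh : Summable (fun k : ℕ => ((k:ℝ) + 1) * x t (k + 1) * Real.exp (ζ * k)) := by
    refine (((summable_nat_add_iff 1).2 hSK).mul_left (Real.exp (-ζ))).congr fun n => ?_
    push_cast
    rw [mul_add, mul_one, Real.exp_add, Real.exp_neg]
    field_simp
  -- shifted tsum values
  have Tb : (∑' k : ℕ, (if k = 0 then 0 else x t (k - 1)) * Real.exp (ζ * k))
      = Real.exp ζ * h := by
    rw [Summable.tsum_eq_zero_add hSb]
    have h0 : (if (0:ℕ) = 0 then (0:ℝ) else x t (0 - 1)) * Real.exp (ζ * ((0:ℕ):ℝ)) = 0 := by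
      simp
    have hc : ∀ n : ℕ, (if n + 1 = 0 then (0:ℝ) else x t (n + 1 - 1))
        * Real.exp (ζ * ((n + 1 : ℕ):ℝ)) = Real.exp ζ * (x t n * Real.exp (ζ * n)) := by
      intro n
      simp only [Nat.add_sub_cancel, Nat.succ_ne_zero, if_false]
      push_cast
      rw [mul_add, mul_one, Real.exp_add]
      ring
    rw [h0, zero_add, tsum_congr hc, tsum_mul_left]
  have Tsh : (∑' k : ℕ, ((k:ℝ) + 1) * x t (k + 1) * Real.exp (ζ * k))
      = Real.exp (-ζ) * K := by
    have hgshift : (∑' n : ℕ,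
        ((n + 1 : ℕ):ℝ) * x t (n + 1) * Real.exp (ζ * ((n + 1 : ℕ):ℝ))) = K := by
      have h2 := Summable.tsum_eq_zero_add hSK
      simp only [Nat.cast_zero, zero_mul, zero_add] at h2
      rw [hK, h2]
    have hc : ∀ n : ℕ, ((n:ℝ) + 1) * x t (n + 1) * Real.exp (ζ * n)
        = Real.exp (-ζ) * (((n + 1 : ℕ):ℝ) * x t (n + 1) * Real.exp (ζ * ((n + 1 : ℕ):ℝ))) := by
      intro n
      push_cast
      rw [mul_add, mul_one, Real.exp_add, Real.exp_neg]
      field_simp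
    rw [tsum_congr hc, tsum_mul_left, hgshift]
  -- the main computation of the termwise derivative sum
  have key : (∑' k : ℕ,
      (α * (∑' ℓ : ℕ, ((ℓ : ℝ) - k) * x t ℓ) * x t k
        + lam * ((if k = 0 then 0 else x t (k - 1)) - x t k)
        + γ * (((k : ℝ) + 1) * x t (k + 1) - (k : ℝ) * x t k)) * Real.exp (ζ * k))
      = (α * M + lam * (Real.exp ζ - 1)) * h - (α + γ * (1 - Real.exp (-ζ))) * K := by
    have step1 : ∀ k : ℕ,
        (α * (∑' ℓ : ℕ, ((ℓ : ℝ) - k) * x t ℓ) * x t k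
          + lam * ((if k = 0 then 0 else x t (k - 1)) - x t k)
          + γ * (((k : ℝ) + 1) * x t (k + 1) - (k : ℝ) * x t k)) * Real.exp (ζ * k)
        = ((α * M - lam) * (x t k * Real.exp (ζ * k))
            + (-(α + γ)) * ((k:ℝ) * x t k * Real.exp (ζ * k)))
          + (lam * ((if k = 0 then 0 else x t (k - 1)) * Real.exp (ζ * k))
            + γ * (((k : ℝ) + 1) * x t (k + 1) * Real.exp (ζ * k))) := by
      intro k
      rw [hinner k]
      ring
    rw [tsum_congr step1]
    have hA : Summable (fun k : ℕ => (α * M - lam) * (x t k * Real.exp (ζ * k))) :=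
      hS0.mul_left _
    have hB : Summable (fun k : ℕ => (-(α + γ)) * ((k:ℝ) * x t k * Real.exp (ζ * k))) :=
      hSK.mul_left _
    have hC : Summable
        (fun k : ℕ => lam * ((if k = 0 then 0 else x t (k - 1)) * Real.exp (ζ * k))) :=
      hSb.mul_left _
    have hD : Summable
        (fun k : ℕ => γ * (((k : ℝ) + 1) * x t (k + 1) * Real.exp (ζ * k))) :=
      hSsh.mul_left _
    rw [Summable.tsum_add (hA.add hB) (hC.add hD), Summable.tsum_add hA hB, Summable.tsum_add hC hD,
      tsum_mul_left, tsum_mul_left, tsum_mul_left, tsum_mul_left, Tb, Tsh,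
      ← hh, ← hK]
    ring
  -- conclude
  rw [key] at hterm
  have hlog := hterm.log (ne_of_gt hhpos)
  have hval : ((α * M + lam * (Real.exp ζ - 1)) * h - (α + γ * (1 - Real.exp (-ζ))) * K) / h
      = α * M + lam * (Real.exp ζ - 1) - (α + γ * (1 - Real.exp (-ζ))) * (K / h) := by
    field_simp
  rw [hval] at hlog
  exact hlog
end

section
/- For γ > 0, λ ≥ 0 and any k ∈ ℕ₀, the explicit formula x_k(t) given in the paper converges as t → ∞ to the Poisson weight e^{-λ/(α+γ)} (λ/(α+γ))^k / k!. Concretely: with a = α+γ > 0 and any probability vector (x_i(0)) on ℕ₀ with ∑_i x_i(0) e^{ξi} < ∞ for some ξ > 0, define N_k(t) = ∑_{i=0}^∞ x_i(0) ∑_{j=0}^{i∧k} C(i,j) ((γ(1-e^{-at}))/a)^{i-j} e^{-jat} (λ(1-e^{-at})/a)^{k-j}/(k-j)! and D(t) = ∑_{i=0}^∞ x_i(0) (γ/a - (α/a)e^{-at})^i · exp((λ/a)(1-e^{-at})). Then N_k(t)/D(t) → e^{-λ/a}(λ/a)^k/k! as t → ∞. -/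
open Real Filter

/-- Polynomial growth is dominated by exponential growth. -/
lemma aux_growth (ξ : ℝ) (hξ : 0 < ξ) (k : ℕ) :
    ∃ C : ℝ, ∀ i : ℕ, ((i : ℝ) + 1) ^ k ≤ C * Real.exp (ξ * i) := by
  have h1 : Tendsto (fun x : ℝ => x ^ k * Real.exp (-x)) atTop (nhds 0) :=
    tendsto_pow_mul_exp_neg_atTop_nhds_zero k
  have h2 : Tendsto (fun i : ℕ => ξ * ((i : ℝ) + 1)) atTop atTop :=
    Tendsto.const_mul_atTop hξ
      (tendsto_atTop_add_const_right _ 1 tendsto_natCast_atTop_atTop)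
  have h3 : Tendsto (fun i : ℕ => (ξ * ((i : ℝ) + 1)) ^ k *
      Real.exp (-(ξ * ((i : ℝ) + 1)))) atTop (nhds 0) := h1.comp h2
  obtain ⟨C, hC⟩ := h3.bddAbove_range
  refine ⟨C / ξ ^ k * Real.exp ξ, fun i => ?_⟩
  have hCi : (ξ * ((i : ℝ) + 1)) ^ k * Real.exp (-(ξ * ((i : ℝ) + 1))) ≤ C :=
    hC (Set.mem_range_self i)
  have hξk : (0:ℝ) < ξ ^ k := pow_pos hξ k
  have hepos : (0:ℝ) < Real.exp (-(ξ * ((i : ℝ) + 1))) := Real.exp_pos _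
  have key : ((i : ℝ) + 1) ^ k =
      ((ξ * ((i : ℝ) + 1)) ^ k * Real.exp (-(ξ * ((i : ℝ) + 1)))) *
        (Real.exp ξ * Real.exp (ξ * i) / ξ ^ k) := by
    rw [mul_pow, ← Real.exp_add, Real.exp_neg]
    have : ξ * ((i : ℝ) + 1) = ξ + ξ * i := by ring
    rw [this]
    field_simp
  rw [key]
  calc (ξ * ((i : ℝ) + 1)) ^ k * Real.exp (-(ξ * ((i : ℝ) + 1))) *
        (Real.exp ξ * Real.exp (ξ * i) / ξ ^ k)
      ≤ C * (Real.exp ξ * Real.exp (ξ * i) / ξ ^ k) := by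
        apply mul_le_mul_of_nonneg_right hCi
        positivity
    _ = C / ξ ^ k * Real.exp ξ * Real.exp (ξ * i) := by ring

/-- Convergence of the explicit solution formula to the Poisson equilibrium: with
`a = α + γ > 0` and `γ > 0`, `N_k(t)/D(t) → e^{-λ/a} (λ/a)^k / k!` as `t → ∞`. -/
theorem explicit_solution_limit (α lam γ : ℝ) (hα : 0 ≤ α) (hlam : 0 ≤ lam) (hγ : 0 < γ)
    (x0 : ℕ → ℝ) (hpos : ∀ i, 0 ≤ x0 i) (hsum : (∑' i, x0 i) = 1)
    (hexp : ∃ ξ > 0, Summable (fun i : ℕ => x0 i * Real.exp (ξ * i)))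
    (k : ℕ) :
    Filter.Tendsto
      (fun t : ℝ =>
        (∑' i : ℕ, x0 i * ∑ j ∈ Finset.range (min i k + 1),
            (i.choose j : ℝ)
              * (γ * (1 - Real.exp (-((α + γ) * t))) / (α + γ)) ^ (i - j)
              * Real.exp (-(j * (α + γ) * t))
              * (lam * (1 - Real.exp (-((α + γ) * t))) / (α + γ)) ^ (k - j)
              / (Nat.factorial (k - j) : ℝ))
          / (∑' i : ℕ, x0 i
              * (γ / (α + γ) - α / (α + γ) * Real.exp (-((α + γ) * t))) ^ i
              * Real.exp (lam / (α + γ) * (1 - Real.exp (-((α + γ) * t))))))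
      Filter.atTop
      (nhds (Real.exp (-(lam / (α + γ))) * (lam / (α + γ)) ^ k / (Nat.factorial k : ℝ))) := by
  obtain ⟨ξ, hξ, hSexp⟩ := hexp
  set a := α + γ with ha_def
  have ha : 0 < a := by positivity
  -- the exponential tends to 0
  have hu : Tendsto (fun t : ℝ => Real.exp (-(a * t))) atTop (nhds 0) :=
    Real.tendsto_exp_atBot.comp
      (tendsto_neg_atTop_atBot.comp (Tendsto.const_mul_atTop ha tendsto_id))
  have hga : γ / a ≤ 1 := by rw [div_le_one ha]; linarith
  have hga0 : 0 ≤ γ / a := by positivity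
  have hla0 : 0 ≤ lam / a := by positivity
  have haa : α / a ≤ 1 := by rw [div_le_one ha]; linarith
  -- summability helpers
  have hx0sum : Summable x0 := by
    apply hSexp.of_nonneg_of_le hpos
    intro i
    exact le_mul_of_one_le_right (hpos i) (Real.one_le_exp (mul_nonneg hξ.le (Nat.cast_nonneg i)))
  obtain ⟨C, hC⟩ := aux_growth ξ hξ k
  have hpoly : Summable (fun i : ℕ => x0 i * ((i : ℝ) + 1) ^ k) := by
    apply Summable.of_nonneg_of_le (fun i => mul_nonneg (hpos i) (by positivity)) (fun i => ?_)
      (hSexp.mul_left C)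
    calc x0 i * ((i : ℝ) + 1) ^ k ≤ x0 i * (C * Real.exp (ξ * i)) :=
          mul_le_mul_of_nonneg_left (hC i) (hpos i)
      _ = C * (x0 i * Real.exp (ξ * i)) := by ring
  -- the geometric-type sum S
  have hSgeo : Summable (fun i : ℕ => x0 i * (γ / a) ^ i) := by
    apply Summable.of_nonneg_of_le
      (fun i => mul_nonneg (hpos i) (pow_nonneg hga0 _)) (fun i => ?_) hx0sum
    exact mul_le_of_le_one_right (hpos i) (pow_le_one₀ hga0 hga)
  set S : ℝ := ∑' i : ℕ, x0 i * (γ / a) ^ i with hS_def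
  have hS_pos : 0 < S := by
    have hex : ∃ i, 0 < x0 i := by
      by_contra h
      push_neg at h
      have hz : ∀ i, x0 i = 0 := fun i => le_antisymm (h i) (hpos i)
      rw [tsum_congr hz, tsum_zero] at hsum
      norm_num at hsum
    obtain ⟨i0, hi0⟩ := hex
    have hle : x0 i0 * (γ / a) ^ i0 ≤ S :=
      Summable.le_tsum hSgeo i0 (fun j _ => mul_nonneg (hpos j) (pow_nonneg hga0 _))
    have : 0 < x0 i0 * (γ / a) ^ i0 := mul_pos hi0 (pow_pos (div_pos hγ ha) _)
    linarith
  -- Numerator convergence via Tannery's theorem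
  have hN : Tendsto
      (fun t : ℝ => ∑' i : ℕ, x0 i * ∑ j ∈ Finset.range (min i k + 1),
          (i.choose j : ℝ)
            * (γ * (1 - Real.exp (-(a * t))) / a) ^ (i - j)
            * Real.exp (-(j * a * t))
            * (lam * (1 - Real.exp (-(a * t))) / a) ^ (k - j)
            / (Nat.factorial (k - j) : ℝ))
      atTop (nhds (∑' i : ℕ, x0 i * ((γ / a) ^ i * ((lam / a) ^ k / (Nat.factorial k : ℝ))))) := by
    apply tendsto_tsum_of_dominated_convergence
      (bound := fun i : ℕ => x0 i * ((k + 1 : ℝ) * (((i : ℝ) + 1) ^ k * (1 + lam / a) ^ k)))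
    · -- summability of bound
      apply Summable.congr ((hpoly.mul_left ((k + 1 : ℝ) * (1 + lam / a) ^ k)))
      intro i; ring
    · -- pointwise convergence
      intro i
      have he1 : Tendsto (fun t : ℝ => 1 - Real.exp (-(a * t))) atTop (nhds 1) := by
        simpa using tendsto_const_nhds.sub hu
      have hterm : ∀ j ∈ Finset.range (min i k + 1),
          Tendsto (fun t : ℝ => (i.choose j : ℝ)
              * (γ * (1 - Real.exp (-(a * t))) / a) ^ (i - j)
              * Real.exp (-(j * a * t))
              * (lam * (1 - Real.exp (-(a * t))) / a) ^ (k - j)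
              / (Nat.factorial (k - j) : ℝ))
            atTop (nhds ((i.choose j : ℝ) * (γ * 1 / a) ^ (i - j)
              * (if j = 0 then (1:ℝ) else 0) * (lam * 1 / a) ^ (k - j)
              / (Nat.factorial (k - j) : ℝ))) := by
        intro j _
        have h1 : Tendsto (fun t : ℝ => (γ * (1 - Real.exp (-(a * t))) / a) ^ (i - j))
            atTop (nhds ((γ * 1 / a) ^ (i - j))) := ((he1.const_mul γ).div_const a).pow _
        have h3 : Tendsto (fun t : ℝ => (lam * (1 - Real.exp (-(a * t))) / a) ^ (k - j))
            atTop (nhds ((lam * 1 / a) ^ (k - j))) := ((he1.const_mul lam).div_const a).pow _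
        have h2 : Tendsto (fun t : ℝ => Real.exp (-((j : ℝ) * a * t)))
            atTop (nhds (if j = 0 then (1:ℝ) else 0)) := by
          rcases Nat.eq_zero_or_pos j with hj | hj
          · subst hj; simpa using (tendsto_const_nhds : Tendsto (fun _ : ℝ => (1:ℝ)) atTop _)
          · have hj0 : j ≠ 0 := Nat.pos_iff_ne_zero.mp hj
            simp only [if_neg hj0]
            have := hu.pow j
            rw [zero_pow hj0] at this
            apply this.congr
            intro t
            rw [← Real.exp_nat_mul]
            congr 1; ring
        exact (((tendsto_const_nhds.mul h1).mul h2).mul h3).div_const _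
      have hsumlim := tendsto_finset_sum _ hterm
      have heval : (∑ j ∈ Finset.range (min i k + 1), (i.choose j : ℝ) * (γ * 1 / a) ^ (i - j)
            * (if j = 0 then (1:ℝ) else 0) * (lam * 1 / a) ^ (k - j)
            / (Nat.factorial (k - j) : ℝ))
          = (γ / a) ^ i * ((lam / a) ^ k / (Nat.factorial k : ℝ)) := by
        rw [Finset.sum_eq_single_of_mem 0 (Finset.mem_range.mpr (Nat.succ_pos _))]
        · simp [mul_one, mul_div_assoc]
        · intro j _ hj0
          simp [hj0]
      rw [← heval]
      exact hsumlim.const_mul (x0 i)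
    · -- uniform bound, eventually (for t ≥ 0)
      filter_upwards [eventually_ge_atTop (0:ℝ)] with t ht
      intro i
      set u : ℝ := Real.exp (-(a * t)) with hu_def
      have hu0 : 0 < u := Real.exp_pos _
      have hu1 : u ≤ 1 := Real.exp_le_one_iff.mpr (by nlinarith)
      have h1u0 : 0 ≤ 1 - u := by linarith
      have h1u1 : 1 - u ≤ 1 := by linarith
      have hA0 : 0 ≤ γ * (1 - u) / a := by positivity
      have hA1 : γ * (1 - u) / a ≤ 1 := by
        rw [div_le_one ha]; nlinarith
      have hB0 : 0 ≤ lam * (1 - u) / a := by positivity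
      have hB1 : lam * (1 - u) / a ≤ 1 + lam / a := by
        have : lam * (1 - u) / a ≤ lam / a :=
          (div_le_div_iff_of_pos_right ha).mpr (by nlinarith)
        linarith
      have htermle : ∀ j ∈ Finset.range (min i k + 1),
          (i.choose j : ℝ) * (γ * (1 - u) / a) ^ (i - j) * u ^ j
            * (lam * (1 - u) / a) ^ (k - j) / (Nat.factorial (k - j) : ℝ)
          ≤ ((i : ℝ) + 1) ^ k * (1 + lam / a) ^ k := by
        intro j hj
        have hjk : j ≤ k := by
          have := Finset.mem_range.mp hj
          omega
        have hchoose : (i.choose j : ℝ) ≤ ((i : ℝ) + 1) ^ k := by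
          calc (i.choose j : ℝ) ≤ ((i : ℝ)) ^ j := by exact_mod_cast Nat.choose_le_pow i j
            _ ≤ ((i : ℝ) + 1) ^ j := pow_le_pow_left₀ (by positivity) (by linarith) j
            _ ≤ ((i : ℝ) + 1) ^ k := pow_le_pow_right₀ (by linarith [Nat.cast_nonneg (α := ℝ) i]) hjk
        have hApow : (γ * (1 - u) / a) ^ (i - j) ≤ 1 := pow_le_one₀ hA0 hA1
        have hupow : u ^ j ≤ 1 := pow_le_one₀ hu0.le hu1
        have hBpow : (lam * (1 - u) / a) ^ (k - j) ≤ (1 + lam / a) ^ k :=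
          calc (lam * (1 - u) / a) ^ (k - j) ≤ (1 + lam / a) ^ (k - j) :=
                pow_le_pow_left₀ hB0 hB1 _
            _ ≤ (1 + lam / a) ^ k := pow_le_pow_right₀ (by linarith) (Nat.sub_le k j)
        have hfact : (1:ℝ) ≤ ((k - j).factorial : ℝ) := by
          exact_mod_cast Nat.one_le_iff_ne_zero.mpr (Nat.factorial_ne_zero _)
        have hnum : (i.choose j : ℝ) * (γ * (1 - u) / a) ^ (i - j) * u ^ j
              * (lam * (1 - u) / a) ^ (k - j)
            ≤ ((i : ℝ) + 1) ^ k * 1 * 1 * (1 + lam / a) ^ k := by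
          have honep : (0:ℝ) ≤ 1 + lam / a := by linarith
          apply mul_le_mul _ hBpow (pow_nonneg hB0 _) (by positivity)
          apply mul_le_mul _ hupow (pow_nonneg hu0.le _) (by positivity)
          exact mul_le_mul hchoose hApow (pow_nonneg hA0 _) (by positivity)
        calc (i.choose j : ℝ) * (γ * (1 - u) / a) ^ (i - j) * u ^ j
              * (lam * (1 - u) / a) ^ (k - j) / (Nat.factorial (k - j) : ℝ)
            ≤ (((i : ℝ) + 1) ^ k * 1 * 1 * (1 + lam / a) ^ k) / 1 :=
              div_le_div₀ (by have honep : (0:ℝ) ≤ 1 + lam / a := by linarith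
                              have := pow_nonneg honep k; positivity) hnum one_pos hfact
          _ = ((i : ℝ) + 1) ^ k * (1 + lam / a) ^ k := by ring
      have hsumle : (∑ j ∈ Finset.range (min i k + 1),
            (i.choose j : ℝ) * (γ * (1 - u) / a) ^ (i - j) * u ^ j
              * (lam * (1 - u) / a) ^ (k - j) / (Nat.factorial (k - j) : ℝ))
          ≤ (k + 1 : ℝ) * (((i : ℝ) + 1) ^ k * (1 + lam / a) ^ k) := by
        calc (∑ j ∈ Finset.range (min i k + 1),
              (i.choose j : ℝ) * (γ * (1 - u) / a) ^ (i - j) * u ^ j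
                * (lam * (1 - u) / a) ^ (k - j) / (Nat.factorial (k - j) : ℝ))
            ≤ (Finset.range (min i k + 1)).card •
                (((i : ℝ) + 1) ^ k * (1 + lam / a) ^ k) :=
              Finset.sum_le_card_nsmul _ _ _ htermle
          _ = ((min i k + 1 : ℕ) : ℝ) * (((i : ℝ) + 1) ^ k * (1 + lam / a) ^ k) := by
              rw [Finset.card_range, nsmul_eq_mul]
          _ ≤ (k + 1 : ℝ) * (((i : ℝ) + 1) ^ k * (1 + lam / a) ^ k) := by
              apply mul_le_mul_of_nonneg_right _
                (by have honep : (0:ℝ) ≤ 1 + lam / a := by linarith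
                    have := pow_nonneg honep k; positivity)
              have : min i k + 1 ≤ k + 1 := by omega
              exact_mod_cast this
      have hsumnn : 0 ≤ ∑ j ∈ Finset.range (min i k + 1),
          (i.choose j : ℝ) * (γ * (1 - u) / a) ^ (i - j) * u ^ j
            * (lam * (1 - u) / a) ^ (k - j) / (Nat.factorial (k - j) : ℝ) := by
        apply Finset.sum_nonneg
        intro j _
        exact div_nonneg (mul_nonneg (mul_nonneg (mul_nonneg (Nat.cast_nonneg _)
          (pow_nonneg hA0 _)) (pow_nonneg hu0.le _)) (pow_nonneg hB0 _)) (Nat.cast_nonneg _)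
      have hrw : ∀ j : ℕ, Real.exp (-((j : ℝ) * a * t)) = u ^ j := by
        intro j
        rw [hu_def, ← Real.exp_nat_mul]
        congr 1; ring
      rw [Real.norm_eq_abs]
      have heqsum : (∑ j ∈ Finset.range (min i k + 1),
            (i.choose j : ℝ) * (γ * (1 - Real.exp (-(a * t))) / a) ^ (i - j)
              * Real.exp (-((j:ℝ) * a * t))
              * (lam * (1 - Real.exp (-(a * t))) / a) ^ (k - j) / (Nat.factorial (k - j) : ℝ))
          = ∑ j ∈ Finset.range (min i k + 1),
            (i.choose j : ℝ) * (γ * (1 - u) / a) ^ (i - j) * u ^ j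
              * (lam * (1 - u) / a) ^ (k - j) / (Nat.factorial (k - j) : ℝ) := by
        apply Finset.sum_congr rfl
        intro j _
        rw [hrw j]
      rw [heqsum, abs_of_nonneg (mul_nonneg (hpos i) hsumnn)]
      exact mul_le_mul_of_nonneg_left hsumle (hpos i)
  -- Denominator convergence via Tannery's theorem
  have hD : Tendsto
      (fun t : ℝ => ∑' i : ℕ, x0 i * (γ / a - α / a * Real.exp (-(a * t))) ^ i
          * Real.exp (lam / a * (1 - Real.exp (-(a * t)))))
      atTop (nhds (∑' i : ℕ, x0 i * (γ / a) ^ i * Real.exp (lam / a))) := by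
    apply tendsto_tsum_of_dominated_convergence
      (bound := fun i : ℕ => x0 i * Real.exp (lam / a))
    · exact hx0sum.mul_right _
    · intro i
      have h1 : Tendsto (fun t : ℝ => (γ / a - α / a * Real.exp (-(a * t))) ^ i)
          atTop (nhds ((γ / a - α / a * 0) ^ i)) :=
        (tendsto_const_nhds.sub (hu.const_mul (α / a))).pow i
      have h2 : Tendsto (fun t : ℝ => Real.exp (lam / a * (1 - Real.exp (-(a * t)))))
          atTop (nhds (Real.exp (lam / a * (1 - 0)))) :=
        (Real.continuous_exp.tendsto _).comp
          ((tendsto_const_nhds.sub hu).const_mul (lam / a))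
      have := (h1.const_mul (x0 i)).mul h2
      simpa using this
    · filter_upwards [eventually_ge_atTop (0:ℝ)] with t ht
      intro i
      set u : ℝ := Real.exp (-(a * t)) with hu_def
      have hu0 : 0 < u := Real.exp_pos _
      have hu1 : u ≤ 1 := Real.exp_le_one_iff.mpr (by nlinarith)
      have hP : |γ / a - α / a * u| ≤ 1 := by
        rw [abs_le]
        constructor
        · have h1 : α / a * u ≤ α / a := by nlinarith [div_nonneg hα ha.le]
          nlinarith [div_nonneg hγ.le ha.le]
        · nlinarith [mul_nonneg (div_nonneg hα ha.le) hu0.le]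
      have hE : Real.exp (lam / a * (1 - u)) ≤ Real.exp (lam / a) := by
        apply Real.exp_le_exp.mpr
        nlinarith
      rw [Real.norm_eq_abs, abs_mul, abs_mul, abs_of_nonneg (hpos i),
        abs_of_nonneg (Real.exp_pos _).le, abs_pow]
      calc x0 i * |γ / a - α / a * u| ^ i * Real.exp (lam / a * (1 - u))
          ≤ x0 i * 1 ^ i * Real.exp (lam / a) := by
            apply mul_le_mul _ hE (Real.exp_pos _).le
              (mul_nonneg (hpos i) (by norm_num))
            exact mul_le_mul_of_nonneg_left (pow_le_pow_left₀ (abs_nonneg _) hP i) (hpos i)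
        _ = x0 i * Real.exp (lam / a) := by ring
  -- rewrite the limits using tsum_mul_right
  have hNlim : (∑' i : ℕ, x0 i * ((γ / a) ^ i * ((lam / a) ^ k / (Nat.factorial k : ℝ))))
      = S * ((lam / a) ^ k / (Nat.factorial k : ℝ)) := by
    rw [hS_def, ← tsum_mul_right]
    exact tsum_congr fun i => by ring
  have hDlim : (∑' i : ℕ, x0 i * (γ / a) ^ i * Real.exp (lam / a))
      = S * Real.exp (lam / a) := by
    rw [hS_def, ← tsum_mul_right]
  rw [hNlim] at hN
  rw [hDlim] at hD
  have hne : S * Real.exp (lam / a) ≠ 0 :=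
    ne_of_gt (mul_pos hS_pos (Real.exp_pos _))
  have hfinal := hN.div hD hne
  have heq : S * ((lam / a) ^ k / (Nat.factorial k : ℝ)) / (S * Real.exp (lam / a))
      = Real.exp (-(lam / a)) * (lam / a) ^ k / (Nat.factorial k : ℝ) := by
    rw [Real.exp_neg]
    have hfk : (Nat.factorial k : ℝ) ≠ 0 := Nat.cast_ne_zero.mpr (Nat.factorial_ne_zero k)
    field_simp
  rw [heq] at hfinal
  exact hfinal
end

section
/- Duality/integrated form: let (x(t))_{t≥0} be a solution of the cumulant equation d/dt log h_ζ(x(t)) = α κ₁(x(t)) + λ(e^ζ-1) - (α + γ(1-e^{-ζ})) ∂/∂ζ log h_ζ(x(t)) (valid for 0 < ζ < ξ), and let ζ(t) solve ζ' = -(α + γ(1-e^{-ζ})) with ζ(0) ∈ (0,ξ). Assume (t,ζ) ↦ log h_ζ(x(t)) is C¹ on the relevant domain. Then for all t ≥ 0: log h_{ζ(0)}(x(t)) = log h_{ζ(t)}(x(0)) + ∫_0^t (λ(e^{ζ(t-s)} - 1) + α κ₁(x(s))) ds. -/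
open Real

/-- Duality / integrated form: if `g(t,ζ) = log h_ζ(x(t))` is `C¹` and satisfies the cumulant
PDE, and `ζ(·)` solves `ζ' = -(α + γ(1-e^{-ζ}))` with `ζ(0) ∈ (0,ξ)`, then
`log h_{ζ(0)}(x(t)) = log h_{ζ(t)}(x(0)) + ∫_0^t (λ(e^{ζ(t-s)}-1) + α κ₁(x(s))) ds`. -/
theorem duality_integrated (α lam γ ξ : ℝ) (hα : 0 ≤ α) (hlam : 0 ≤ lam) (hγ : 0 ≤ γ)
    (hξ : 0 < ξ)
    (x : ℝ → ℕ → ℝ)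
    (hpos : ∀ s k, 0 ≤ x s k) (hsum1 : ∀ s, (∑' k, x s k) = 1)
    (hexp : ∀ s, Summable (fun k : ℕ => x s k * Real.exp (ξ * k)))
    (g : ℝ → ℝ → ℝ)
    (hg : ∀ s z : ℝ, g s z = Real.log (∑' k : ℕ, x s k * Real.exp (z * k)))
    (hC1 : ContDiff ℝ 1 (fun q : ℝ × ℝ => g q.1 q.2))
    (hpde : ∀ s z : ℝ, 0 < z → z < ξ →
      deriv (fun u => g u z) s
        = α * (∑' k : ℕ, (k : ℝ) * x s k) + lam * (Real.exp z - 1)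
          - (α + γ * (1 - Real.exp (-z))) * deriv (fun w => g s w) z)
    (ζ : ℝ → ℝ) (hζ0 : ζ 0 ∈ Set.Ioo 0 ξ)
    (hζode : ∀ s : ℝ, HasDerivAt ζ (-(α + γ * (1 - Real.exp (-(ζ s))))) s)
    (hζrange : ∀ s : ℝ, 0 ≤ s → ζ s ∈ Set.Ioo 0 ξ)
    (t : ℝ) (ht : 0 ≤ t) :
    g t (ζ 0)
      = g 0 (ζ t)
        + ∫ s in (0:ℝ)..t,
            (lam * (Real.exp (ζ (t - s)) - 1) + α * ∑' k : ℕ, (k : ℝ) * x s k) := by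
  classical
  set G : ℝ × ℝ → ℝ := fun q => g q.1 q.2 with hG
  have hdiff : Differentiable ℝ G := hC1.differentiable one_ne_zero
  set c : ℝ → ℝ := fun s => α + γ * (1 - Real.exp (-(ζ (t - s)))) with hc
  have hζcont : Continuous ζ := by
    rw [continuous_iff_continuousAt]
    exact fun s => (hζode s).continuousAt
  -- derivative of s ↦ ζ (t - s)
  have hφ' : ∀ s : ℝ, HasDerivAt (fun u => ζ (t - u)) (c s) s := by
    intro s
    have h1 : HasDerivAt (fun u : ℝ => t - u) (-1) s := by
      simpa using (hasDerivAt_id s).const_sub t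
    have : HasDerivAt (fun u => ζ (t - u)) (-(α + γ * (1 - Real.exp (-(ζ (t - s))))) * -1) s :=
      (hζode (t - s)).comp s h1
    convert this using 1
    simp [hc]
  set F : ℝ → ℝ := fun s => g s (ζ (t - s)) with hF
  set F' : ℝ → ℝ := fun s => fderiv ℝ G (s, ζ (t - s)) (1, c s) with hF'
  have hFderiv : ∀ s : ℝ, HasDerivAt F (F' s) s := by
    intro s
    have hcurve : HasDerivAt (fun u : ℝ => (u, ζ (t - u))) ((1 : ℝ), c s) s :=
      (hasDerivAt_id s).prodMk (hφ' s)
    exact (hdiff (s, ζ (t - s))).hasFDerivAt.comp_hasDerivAt s hcurve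
  have hcontF' : Continuous F' := by
    have h1 : Continuous (fun s : ℝ => fderiv ℝ G (s, ζ (t - s))) :=
      (hC1.continuous_fderiv one_ne_zero).comp
        (continuous_id.prodMk (hζcont.comp (continuous_const.sub continuous_id)))
    have h2 : Continuous (fun s : ℝ => ((1 : ℝ), c s)) :=
      continuous_const.prodMk
        (continuous_const.add (continuous_const.mul (continuous_const.sub
          ((Real.continuous_exp.comp (continuous_neg.comp
            (hζcont.comp (continuous_const.sub continuous_id)))))))) 
    exact h1.clm_apply h2
  have hFTC : ∫ s in (0:ℝ)..t, F' s = F t - F 0 :=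
    intervalIntegral.integral_eq_sub_of_hasDerivAt (fun s _ => hFderiv s)
      (hcontF'.intervalIntegrable 0 t)
  -- identify F' with the integrand on [0, t]
  have hEq : Set.EqOn
      (fun s => lam * (Real.exp (ζ (t - s)) - 1) + α * ∑' k : ℕ, (k : ℝ) * x s k)
      F' (Set.uIcc 0 t) := by
    intro s hs
    rw [Set.uIcc_of_le ht] at hs
    obtain ⟨hs0, hst⟩ := hs
    have hts : 0 ≤ t - s := by linarith
    obtain ⟨hz0, hzξ⟩ := hζrange (t - s) hts
    set z := ζ (t - s) with hz
    set D := fderiv ℝ G (s, z) with hD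
    have hd1 : HasDerivAt (fun u => g u z) (D (1, 0)) s := by
      have hcurve : HasDerivAt (fun u : ℝ => (u, z)) ((1 : ℝ), (0 : ℝ)) s :=
        (hasDerivAt_id s).prodMk (hasDerivAt_const s z)
      exact (hdiff (s, z)).hasFDerivAt.comp_hasDerivAt s hcurve
    have hd2 : HasDerivAt (fun w => g s w) (D (0, 1)) z := by
      have hcurve : HasDerivAt (fun w : ℝ => (s, w)) ((0 : ℝ), (1 : ℝ)) z :=
        (hasDerivAt_const z s).prodMk (hasDerivAt_id z)
      exact (hdiff (s, z)).hasFDerivAt.comp_hasDerivAt z hcurve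
    have hlin : F' s = D (1, 0) + c s * D (0, 1) := by
      have hv : ((1 : ℝ), c s) = ((1 : ℝ), (0 : ℝ)) + c s • ((0 : ℝ), (1 : ℝ)) := by
        simp [Prod.ext_iff]
      simp only [hF', hD, hz, hv, map_add, map_smul, smul_eq_mul]
    have hp := hpde s z hz0 hzξ
    rw [hd1.deriv] at hp
    rw [hd2.deriv] at hp
    have : F' s = (α * (∑' k : ℕ, (k : ℝ) * x s k) + lam * (Real.exp z - 1)
        - c s * D (0, 1)) + c s * D (0, 1) := by
      rw [hlin, hp]
    rw [this]; ring
  have hInt : ∫ s in (0:ℝ)..t,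
      (lam * (Real.exp (ζ (t - s)) - 1) + α * ∑' k : ℕ, (k : ℝ) * x s k)
      = F t - F 0 := by
    rw [intervalIntegral.integral_congr hEq, hFTC]
  rw [hInt]
  have hFt : F t = g t (ζ 0) := by simp [hF]
  have hF0 : F 0 = g 0 (ζ t) := by simp [hF]
  rw [hFt, hF0]; ring
end

section
/- If two solutions (x(t)) and (y(t)) of the system ẋ_k = α(∑_ℓ(ℓ-k)x_ℓ)x_k + λ(x_{k-1}-x_k) + γ((k+1)x_{k+1}-kx_k), both taking values in S_ξ with the same initial condition x(0) = y(0) ∈ S_ξ, satisfy the duality relation log h_{ζ(0)}(x(t)) - log h_{ζ(0)}(y(t)) = α∫_0^t ∑_ℓ ℓ(x_ℓ(s) - y_ℓ(s)) ds for all ζ(0) ∈ (0,ξ) and all t ≥ 0, then x(t) = y(t) for all t ≥ 0. -/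
open Real

lemma coeff_zero_of_tsum_zero (R : ℝ) (hR : 1 < R) (c : ℕ → ℝ)
    (hsum : Summable (fun n => |c n| * R ^ n))
    (hzero : ∀ w : ℝ, 1 < w → w < R → (∑' n : ℕ, c n * w ^ n) = 0) :
    ∀ n, c n = 0 := by
  have hR0 : (0:ℝ) < R := by linarith
  set p := FormalMultilinearSeries.ofScalars ℝ c with hp
  have hnorm : ∀ n, ‖p n‖ = |c n| := fun n => by
    rw [hp, FormalMultilinearSeries.ofScalars_norm, Real.norm_eq_abs]
  have hrad : (ENNReal.ofReal R) ≤ p.radius := by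
    rw [ENNReal.ofReal]
    apply p.le_radius_of_summable_norm
    simpa [hnorm, Real.coe_toNNReal R hR0.le] using hsum
  have hradpos : 0 < p.radius := lt_of_lt_of_le (by simp [hR0]) hrad
  have hball := p.hasFPowerSeriesOnBall hradpos
  have hsub : Metric.ball (0:ℝ) R ⊆ EMetric.ball (0:ℝ) p.radius := by
    rw [← Metric.emetric_ball]
    exact EMetric.ball_subset_ball hrad
  have hana : AnalyticOnNhd ℝ p.sum (Metric.ball (0:ℝ) R) :=
    hball.analyticOnNhd.mono hsub
  have hsum_eq : ∀ w : ℝ, p.sum w = ∑' n : ℕ, c n * w ^ n := by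
    intro w
    rw [FormalMultilinearSeries.sum]
    congr 1
    funext n
    rw [hp, FormalMultilinearSeries.ofScalars_apply_eq, smul_eq_mul]
  have hz0mem : (1 + R) / 2 ∈ Metric.ball (0:ℝ) R := by
    simp only [Metric.mem_ball, Real.dist_eq]
    rw [abs_of_pos (by linarith)]; linarith
  have hev : p.sum =ᶠ[nhds ((1 + R)/2)] 0 := by
    filter_upwards [isOpen_Ioo.mem_nhds (show (1+R)/2 ∈ Set.Ioo 1 R by
      constructor <;> [linarith; linarith])] with w hw
    rw [hsum_eq w, hzero w hw.1 hw.2]; rfl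
  have hEq : Set.EqOn p.sum 0 (Metric.ball (0:ℝ) R) :=
    hana.eqOn_zero_of_preconnected_of_eventuallyEq_zero
      (convex_ball (0:ℝ) R).isPreconnected hz0mem hev
  have hat : HasFPowerSeriesAt (0 : ℝ → ℝ) p 0 := by
    apply hball.hasFPowerSeriesAt.congr
    filter_upwards [Metric.ball_mem_nhds (0:ℝ) hR0] with w hw
    exact hEq hw
  have hp0 : p = 0 := hat.eq_zero
  intro n
  have := congrFun hp0 n
  exact (FormalMultilinearSeries.ofScalars_eq_zero ℝ (c := c) n).mp this

/-- Uniqueness via duality: two `S_ξ`-valued solutions of the system with the same initial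
condition which satisfy the duality relation coincide for all times. -/
theorem uniqueness_from_duality (α lam γ ξ : ℝ) (hα : 0 ≤ α) (hlam : 0 ≤ lam) (hγ : 0 ≤ γ)
    (hξ : 0 < ξ)
    (x y : ℝ → ℕ → ℝ)
    (hxpos : ∀ s k, 0 ≤ x s k) (hypos : ∀ s k, 0 ≤ y s k)
    (hxsum1 : ∀ s, (∑' k, x s k) = 1) (hysum1 : ∀ s, (∑' k, y s k) = 1)
    (hxexp : ∀ s, Summable (fun k : ℕ => x s k * Real.exp (ξ * k)))
    (hyexp : ∀ s, Summable (fun k : ℕ => y s k * Real.exp (ξ * k)))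
    (hxode : ∀ s (k : ℕ), HasDerivAt (fun u => x u k)
        (α * (∑' ℓ : ℕ, ((ℓ : ℝ) - k) * x s ℓ) * x s k
          + lam * ((if k = 0 then 0 else x s (k - 1)) - x s k)
          + γ * (((k : ℝ) + 1) * x s (k + 1) - (k : ℝ) * x s k)) s)
    (hyode : ∀ s (k : ℕ), HasDerivAt (fun u => y u k)
        (α * (∑' ℓ : ℕ, ((ℓ : ℝ) - k) * y s ℓ) * y s k
          + lam * ((if k = 0 then 0 else y s (k - 1)) - y s k)
          + γ * (((k : ℝ) + 1) * y s (k + 1) - (k : ℝ) * y s k)) s)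
    (hinit : x 0 = y 0)
    -- duality relation:
    (hdual : ∀ z : ℝ, 0 < z → z < ξ → ∀ t : ℝ, 0 ≤ t →
      Real.log (∑' k : ℕ, x t k * Real.exp (z * k))
          - Real.log (∑' k : ℕ, y t k * Real.exp (z * k))
        = α * ∫ s in (0:ℝ)..t, ∑' ℓ : ℕ, (ℓ : ℝ) * (x s ℓ - y s ℓ))
    -- regularity assumptions:
    (hcont : Continuous (fun s => ∑' ℓ : ℕ, (ℓ : ℝ) * (x s ℓ - y s ℓ)))
    (hxderiv : ∀ t : ℝ, HasDerivWithinAt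
        (fun z => Real.log (∑' k : ℕ, x t k * Real.exp (z * k)))
        (∑' k : ℕ, (k : ℝ) * x t k) (Set.Ici 0) 0)
    (hyderiv : ∀ t : ℝ, HasDerivWithinAt
        (fun z => Real.log (∑' k : ℕ, y t k * Real.exp (z * k)))
        (∑' k : ℕ, (k : ℝ) * y t k) (Set.Ici 0) 0) :
    ∀ t : ℝ, 0 ≤ t → x t = y t := by
  intro t ht
  -- summability of the exponentially weighted sums for 0 ≤ z ≤ ξ
  have hxz : ∀ z : ℝ, 0 ≤ z → z ≤ ξ → Summable (fun k : ℕ => x t k * Real.exp (z * k)) := by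
    intro z hz0 hzξ
    apply Summable.of_nonneg_of_le (fun k => mul_nonneg (hxpos t k) (Real.exp_pos _).le)
      (fun k => ?_) (hxexp t)
    exact mul_le_mul_of_nonneg_left
      (Real.exp_le_exp.mpr (mul_le_mul_of_nonneg_right hzξ (Nat.cast_nonneg _))) (hxpos t _)
  have hyz : ∀ z : ℝ, 0 ≤ z → z ≤ ξ → Summable (fun k : ℕ => y t k * Real.exp (z * k)) := by
    intro z hz0 hzξ
    apply Summable.of_nonneg_of_le (fun k => mul_nonneg (hypos t k) (Real.exp_pos _).le)
      (fun k => ?_) (hyexp t)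
    exact mul_le_mul_of_nonneg_left
      (Real.exp_le_exp.mpr (mul_le_mul_of_nonneg_right hzξ (Nat.cast_nonneg _))) (hypos t _)
  -- the constant on the RHS of the duality relation vanishes
  set g : ℝ → ℝ := fun z => Real.log (∑' k : ℕ, x t k * Real.exp (z * k))
      - Real.log (∑' k : ℕ, y t k * Real.exp (z * k)) with hg
  set C : ℝ := α * ∫ s in (0:ℝ)..t, ∑' ℓ : ℕ, (ℓ : ℝ) * (x s ℓ - y s ℓ) with hCdef
  have hgC : ∀ z : ℝ, 0 < z → z < ξ → g z = C := fun z hz0 hzξ => hdual z hz0 hzξ t ht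
  have hg0 : g 0 = 0 := by
    simp [hg, hxsum1 t, hysum1 t]
  have hcw : ContinuousWithinAt g (Set.Ici 0) 0 :=
    ((hxderiv t).continuousWithinAt).sub ((hyderiv t).continuousWithinAt)
  have h1 : Filter.Tendsto g (nhdsWithin 0 (Set.Ioi 0)) (nhds 0) := by
    have h1' := hcw.tendsto.mono_left
      (nhdsWithin_mono (0:ℝ) Set.Ioi_subset_Ici_self)
    rwa [hg0] at h1'
  have h2 : Filter.Tendsto g (nhdsWithin 0 (Set.Ioi 0)) (nhds C) := by
    apply Filter.Tendsto.congr' _ tendsto_const_nhds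
    filter_upwards [Ioo_mem_nhdsGT_of_mem (Set.mem_Ico.mpr ⟨le_refl (0:ℝ), hξ⟩)] with z hz
    exact (hgC z hz.1 hz.2).symm
  have hC0 : C = 0 := tendsto_nhds_unique h2 h1
  -- hence the generating functions agree
  have key : ∀ z : ℝ, 0 < z → z < ξ →
      (∑' k : ℕ, x t k * Real.exp (z * k)) = (∑' k : ℕ, y t k * Real.exp (z * k)) := by
    intro z hz0 hzξ
    have hlog : Real.log (∑' k : ℕ, x t k * Real.exp (z * k))
        = Real.log (∑' k : ℕ, y t k * Real.exp (z * k)) := by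
      exact sub_eq_zero.mp ((hgC z hz0 hzξ).trans hC0)
    have hSx : (1:ℝ) ≤ ∑' k : ℕ, x t k * Real.exp (z * k) := by
      rw [← hxsum1 t]
      refine Summable.tsum_le_tsum (fun k => ?_) ?_ (hxz z hz0.le hzξ.le)
      · exact le_mul_of_one_le_right (hxpos t k)
          (Real.one_le_exp (mul_nonneg hz0.le (Nat.cast_nonneg _)))
      · apply Summable.of_nonneg_of_le (fun k => hxpos t k) (fun k => ?_) (hxexp t)
        exact le_mul_of_one_le_right (hxpos t k) (Real.one_le_exp (by positivity))
    have hSy : (1:ℝ) ≤ ∑' k : ℕ, y t k * Real.exp (z * k) := by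
      rw [← hysum1 t]
      refine Summable.tsum_le_tsum (fun k => ?_) ?_ (hyz z hz0.le hzξ.le)
      · exact le_mul_of_one_le_right (hypos t k)
          (Real.one_le_exp (mul_nonneg hz0.le (Nat.cast_nonneg _)))
      · apply Summable.of_nonneg_of_le (fun k => hypos t k) (fun k => ?_) (hyexp t)
        exact le_mul_of_one_le_right (hypos t k) (Real.one_le_exp (by positivity))
    calc (∑' k : ℕ, x t k * Real.exp (z * k))
        = Real.exp (Real.log (∑' k : ℕ, x t k * Real.exp (z * k))) :=
          (Real.exp_log (by linarith)).symm
      _ = Real.exp (Real.log (∑' k : ℕ, y t k * Real.exp (z * k))) := by rw [hlog]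
      _ = ∑' k : ℕ, y t k * Real.exp (z * k) := Real.exp_log (by linarith)
  -- apply the coefficient-extraction lemma
  set c : ℕ → ℝ := fun k => x t k - y t k with hc
  have hcsum : Summable (fun n => |c n| * Real.exp ξ ^ n) := by
    apply Summable.of_nonneg_of_le (fun n => by positivity) (fun n => ?_)
      ((hxexp t).add (hyexp t))
    rw [← Real.exp_nat_mul, mul_comm (n:ℝ) ξ]
    have habs : |c n| ≤ x t n + y t n := by
      rw [hc]
      have := abs_sub (x t n) (y t n)
      calc |x t n - y t n| ≤ |x t n| + |y t n| := abs_sub _ _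
        _ = x t n + y t n := by
          rw [abs_of_nonneg (hxpos t n), abs_of_nonneg (hypos t n)]
    calc |c n| * Real.exp (ξ * n) ≤ (x t n + y t n) * Real.exp (ξ * n) :=
          mul_le_mul_of_nonneg_right habs (Real.exp_pos _).le
      _ = x t n * Real.exp (ξ * n) + y t n * Real.exp (ξ * n) := add_mul _ _ _
  have hczero : ∀ w : ℝ, 1 < w → w < Real.exp ξ → (∑' n : ℕ, c n * w ^ n) = 0 := by
    intro w hw1 hwξ
    have hw0 : (0:ℝ) < w := by linarith
    set z : ℝ := Real.log w with hz
    have hz0 : 0 < z := Real.log_pos hw1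
    have hzξ : z < ξ := by
      rw [hz, Real.log_lt_iff_lt_exp hw0]
      exact hwξ
    have hwz : ∀ n : ℕ, w ^ n = Real.exp (z * n) := by
      intro n
      rw [mul_comm, Real.exp_nat_mul, Real.exp_log hw0]
    have : (∑' n : ℕ, c n * w ^ n)
        = (∑' n : ℕ, (x t n * Real.exp (z * n) - y t n * Real.exp (z * n))) := by
      congr 1; funext n; rw [hwz n, hc]; ring
    rw [this, Summable.tsum_sub (hxz z hz0.le hzξ.le) (hyz z hz0.le hzξ.le), key z hz0 hzξ, sub_self]
  have hfinal := coeff_zero_of_tsum_zero (Real.exp ξ)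
    (Real.one_lt_exp_iff.mpr hξ) c hcsum hczero
  funext k
  have := hfinal k
  rw [hc] at this
  exact sub_eq_zero.mp this
end
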